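/- Let V be a finite-dimensional complex vector space with a nondegenerate alternating bilinear form ω, let e ∈ V be nonzero, and let U be a hyperplane of V with V = U ⊕ ℂ·e. Then every linear endomorphism M of V with trace 0 can be written M = X + Y, where X is a linear endomorphism with ω(X v, w) + ω(v, X w) = 0 for all v, w ∈ V, and Y is a linear endomorphism with Y e = 0, Y(U) ⊆ U, and trace Y = 0. (Lie algebra factorization 𝔰𝔩(V) = 𝔰𝔭(V) + 𝔰𝔩_{dim V − 1}.) -/

import Mathlib

open LinearMap (BilinForm)

/-- Lie algebra factorization `𝔰𝔩(V) = 𝔰𝔭(V) + 𝔰𝔩_{dim V − 1}` (Lie-algebra form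
of the first row of Onishchik's Table O): every trace-zero endomorphism `M` of
`V` is a sum `X + Y` with `X` infinitesimally symplectic and `Y` a trace-zero
endomorphism annihilating `e` and preserving the complementary hyperplane `U`. -/
theorem sl_eq_sp_add_sl_factorization
    (V : Type*) [AddCommGroup V] [Module ℂ V] [FiniteDimensional ℂ V]
    (ω : BilinForm ℂ V) (halt : ∀ v : V, ω v v = 0) (hnd : ω.Nondegenerate)
    (e : V) (he : e ≠ 0) (U : Submodule ℂ V) (hc : IsCompl U (Submodule.span ℂ {e})) :
    ∀ M : V →ₗ[ℂ] V, LinearMap.trace ℂ V M = 0 →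
      ∃ X Y : V →ₗ[ℂ] V,
        (∀ v w : V, ω (X v) w + ω v (X w) = 0) ∧
        Y e = 0 ∧
        (∀ u ∈ U, Y u ∈ U) ∧
        LinearMap.trace ℂ V Y = 0 ∧
        M = X + Y := by
  -- skew symmetry of ω
  have hskew : ∀ v w : V, ω v w = - ω w v := by
    intro v w
    have h := halt (v + w)
    simp only [map_add, LinearMap.add_apply, halt, zero_add, add_zero] at h
    linear_combination h
  intro M hM
  -- the coordinate functional `f` for `e` in the decomposition `V = U ⊕ ℂ e`
  set q : Submodule ℂ V := Submodule.span ℂ {e} with hq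
  let pr : V →ₗ[ℂ] q := q.linearProjOfIsCompl U hc.symm
  let f : V →ₗ[ℂ] ℂ :=
    ((LinearEquiv.toSpanNonzeroSingleton ℂ V e he).symm : q →ₗ[ℂ] ℂ) ∘ₗ pr
  have heq : e ∈ q := Submodule.mem_span_singleton_self e
  have hfe : f e = 1 := by
    have h1 : pr e = ⟨e, heq⟩ :=
      Submodule.linearProjOfIsCompl_apply_left hc.symm ⟨e, heq⟩
    have h2 : (⟨e, heq⟩ : q) = LinearEquiv.toSpanNonzeroSingleton ℂ V e he 1 := by
      rw [LinearEquiv.toSpanNonzeroSingleton_one]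
    simp only [f, LinearMap.comp_apply, h1, h2, LinearEquiv.coe_coe,
      LinearEquiv.symm_apply_apply]
  have hfU : ∀ u ∈ U, f u = 0 := by
    intro u hu
    have h1 : pr u = 0 := Submodule.linearProjOfIsCompl_apply_right' hc.symm hu
    simp only [f, LinearMap.comp_apply, h1, map_zero]
  have hpr : ∀ v : V, (pr v : V) = f v • e := by
    intro v
    have h : LinearEquiv.toSpanNonzeroSingleton ℂ V e he (f v) = pr v := by
      simp only [f, LinearMap.comp_apply, LinearEquiv.coe_coe, LinearEquiv.apply_symm_apply]
    rw [← h, LinearEquiv.toSpanNonzeroSingleton_apply]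
  have hmem : ∀ v : V, v - f v • e ∈ U := by
    intro v
    have h1 : pr (v - f v • e) = 0 := by
      rw [map_sub, map_smul]
      have h3 : pr e = ⟨e, heq⟩ :=
        Submodule.linearProjOfIsCompl_apply_left hc.symm ⟨e, heq⟩
      rw [h3]
      have h5 : f v • (⟨e, heq⟩ : q) = pr v := by
        apply Subtype.ext
        show f v • e = (pr v : V)
        rw [hpr]
      rw [h5, sub_self]
    exact (Submodule.linearProjOfIsCompl_apply_eq_zero_iff hc.symm).mp h1
  have hUf : ∀ v : V, f v = 0 → v ∈ U := by
    intro v hv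
    have h := hmem v
    rwa [hv, zero_smul, sub_zero] at h
  -- the vector `a` representing `f` via `ω`
  set a : V := (ω.toDual hnd).symm f with ha
  have haw : ∀ w : V, ω a w = f w := fun w =>
    LinearMap.BilinForm.apply_toDual_symm_apply (hB := hnd) (f := f) (v := w)
  have hfa : f a = 0 := by rw [← haw a, halt]
  have hga : ω a e = 1 := by rw [haw, hfe]
  -- auxiliary functionals
  set φ : V →ₗ[ℂ] ℂ := ω (M e) with hφ
  set g : V →ₗ[ℂ] ℂ := -(ω e) with hg
  have hgaa : g a = 1 := by
    simp only [hg, LinearMap.neg_apply]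
    rw [hskew e a, hga, neg_neg]
  set χ : V →ₗ[ℂ] ℂ := -(f ∘ₗ M) with hχ
  set π : V →ₗ[ℂ] V := LinearMap.id - f.smulRight e with hπ
  have hπv : ∀ v : V, π v = v - f v • e := fun v => rfl
  set gπ : V →ₗ[ℂ] ℂ := g ∘ₗ π with hgπ
  set χπ : V →ₗ[ℂ] ℂ := χ ∘ₗ π with hχπ
  -- the symmetric bilinear form `S` (as a map into the dual) defining `X`
  set S : V →ₗ[ℂ] Module.Dual ℂ V :=
    f.smulRight φ + φ.smulRight f - (φ e • f).smulRight f
      + gπ.smulRight χπ + χπ.smulRight gπ - (χ a • gπ).smulRight gπ with hSdef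
  have hS : ∀ v w : V, S v w = f v * φ w + φ v * f w - φ e * (f v * f w)
      + (gπ v * χπ w + χπ v * gπ w - χ a * (gπ v * gπ w)) := by
    intro v w
    simp only [hSdef, LinearMap.add_apply, LinearMap.sub_apply, LinearMap.smulRight_apply,
      LinearMap.smul_apply, smul_eq_mul]
    ring
  have hSsymm : ∀ v w : V, S v w = S w v := by
    intro v w; rw [hS, hS]; ring
  set X : V →ₗ[ℂ] V := ((ω.toDual hnd).symm : Module.Dual ℂ V →ₗ[ℂ] V) ∘ₗ S with hXdef
  have hX : ∀ v w : V, ω (X v) w = S v w := by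
    intro v w
    simp only [hXdef, LinearMap.comp_apply, LinearEquiv.coe_coe]
    exact LinearMap.BilinForm.apply_toDual_symm_apply (S v) w
  -- X is infinitesimally symplectic
  have hsymp : ∀ v w : V, ω (X v) w + ω v (X w) = 0 := by
    intro v w
    rw [hX, hskew v (X w), hX, hSsymm v w, add_neg_cancel]
  -- `X e = M e`
  have hπe : π e = 0 := by rw [hπv, hfe, one_smul, sub_self]
  have hXe : X e = M e := by
    have h0 : ∀ w : V, ω (X e - M e) w = 0 := by
      intro w
      rw [map_sub, LinearMap.sub_apply, hX, hS]
      have hgπe : gπ e = 0 := by simp [hgπ, LinearMap.comp_apply, hπe]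
      have hχπe : χπ e = 0 := by simp [hχπ, LinearMap.comp_apply, hπe]
      rw [hfe, hgπe, hχπe, ← hφ]
      ring
    exact sub_eq_zero.mp (hnd.1 _ h0)
  -- trace X = 0
  have htrX : LinearMap.trace ℂ V X = 0 := by
    have hconj : ((ω.toDual hnd).symm.conj (-(Module.Dual.transpose (R := ℂ) X))) = X := by
      apply LinearMap.ext; intro v
      rw [LinearEquiv.conj_apply]
      simp only [LinearMap.comp_apply, LinearEquiv.coe_coe, LinearEquiv.symm_symm]
      apply (ω.toDual hnd).injective
      rw [LinearEquiv.apply_symm_apply]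
      apply LinearMap.ext; intro w
      simp only [LinearMap.neg_apply, Module.Dual.transpose_apply, LinearMap.comp_apply]
      have h1 : (ω.toDual hnd) v (X w) = ω v (X w) := LinearMap.BilinForm.toDual_def hnd
      have h2 : (ω.toDual hnd) (X v) w = ω (X v) w := LinearMap.BilinForm.toDual_def hnd
      rw [h1, h2]
      linear_combination -(hsymp v w)
    have htc := LinearMap.trace_conj' (-(Module.Dual.transpose (R := ℂ) X)) (ω.toDual hnd).symm
    rw [hconj, map_neg, LinearMap.trace_transpose'] at htc
    linear_combination htc / 2
  refine ⟨X, M - X, hsymp, ?_, ?_, ?_, ?_⟩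
  · rw [LinearMap.sub_apply, hXe, sub_self]
  · intro u hu
    apply hUf
    have hfu : f u = 0 := hfU u hu
    have hπu : π u = u := by rw [hπv, hfu, zero_smul, sub_zero]
    have hπa : π a = a := by rw [hπv, hfa, zero_smul, sub_zero]
    have hSua : S u a = -(f (M u)) := by
      rw [hS]
      simp only [hgπ, hχπ, LinearMap.comp_apply, hπu, hπa, hfu, hfa, hgaa, hχ,
        LinearMap.neg_apply]
      ring
    have h1 : f (X u) = f (M u) := by
      have h := haw (X u)
      rw [hskew a (X u), hX, hSua, neg_neg] at h
      exact h.symm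
    rw [LinearMap.sub_apply, map_sub, h1, sub_self]
  · rw [map_sub, hM, htrX, sub_zero]
  · abel
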